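/- For every real ρ > 2/log 2, the integer N_ρ satisfies ℓ(M) − ρ·log M ≥ ℓ(N_ρ) − ρ·log N_ρ for every integer M ≥ 1 (equivalently, ben(M) = ℓ(M) − ℓ(N_ρ) − ρ·log(M/N_ρ) ≥ 0 for all M ≥ 1); in particular, N_ρ is a value of Landau's function g. -/

import Mathlib

/-- Landau's function: the maximal order of an element of the symmetric group `S_n`. -/
noncomputable def landau (n : ℕ) : ℕ :=
  Finset.univ.sup fun σ : Equiv.Perm (Fin n) => orderOf σ

/-- The additive function `ℓ` with `ℓ(1) = 0` and `ℓ(p^k) = p^k` for primes `p` and `k ≥ 1`. -/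
def ell (M : ℕ) : ℕ := ∑ p ∈ M.primeFactors, p ^ M.factorization p

/-- `(ℓ(p^k) - ℓ(p^{k-1})) / log p`, the cost of raising the exponent of `p` from `k-1` to `k`. -/
noncomputable def ellCost (p k : ℕ) : ℝ :=
  ((ell (p ^ k) : ℝ) - (ell (p ^ (k - 1)) : ℝ)) / Real.log p

/-- The exponent `α_p` of the prime `p` in `N_ρ`, where `ρ = x / log x`:
`α_p = 0` for `p > x`, and otherwise `α_p` is the (largest) `k ≥ 1` with
`(p^k - p^{k-1})/log p ≤ ρ < (p^{k+1} - p^k)/log p` (here `p^1 - p^0` is to be read as `p`,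
i.e. as `ℓ(p^1) - ℓ(p^0)`). -/
noncomputable def alphaExp (x : ℝ) (p : ℕ) : ℕ :=
  if (p : ℝ) ≤ x then sSup {k : ℕ | 1 ≤ k ∧ ellCost p k ≤ x / Real.log x} else 0

/-- Ramanujan's superior champion `N_ρ = ∏_{p ≤ x} p^{α_p}`, with `ρ = x / log x`. -/
noncomputable def Nrho (x : ℝ) : ℕ :=
  ∏ p ∈ (Finset.range (⌊x⌋₊ + 1)).filter Nat.Prime, p ^ alphaExp x p

lemma ell_one : ell 1 = 0 := by simp [ell]

lemma ell_prime_pow {p k : ℕ} (hp : p.Prime) (hk : 1 ≤ k) : ell (p ^ k) = p ^ k := by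
  simp [ell, Nat.primeFactors_pow p (Nat.one_le_iff_ne_zero.mp hk), hp.primeFactors,
    hp.factorization_pow]

lemma ell_pow_zero (p : ℕ) : ell (p ^ 0) = 0 := by simp [ell]

lemma ell_le_self {M : ℕ} (hM : 1 ≤ M) : ell M ≤ M := by
  have h2 : ∀ p ∈ M.primeFactors, 2 ≤ p ^ M.factorization p := by
    intro p hp
    have hp' := Nat.prime_of_mem_primeFactors hp
    have : 1 ≤ M.factorization p := (Nat.Prime.factorization_pos_of_dvd hp'
      (Nat.one_le_iff_ne_zero.mp hM) (Nat.dvd_of_mem_primeFactors hp))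
    calc 2 = 2 ^ 1 := rfl
    _ ≤ p ^ M.factorization p := Nat.pow_le_pow_left hp'.two_le 1 |>.trans
        (Nat.pow_le_pow_right hp'.pos this)
  have key : ∀ s : Finset ℕ, ∀ f : ℕ → ℕ, (∀ p ∈ s, 2 ≤ f p) → ∑ p ∈ s, f p ≤ ∏ p ∈ s, f p := by
    intro s
    induction s using Finset.cons_induction with
    | empty => intro f _; simp
    | cons a s ha ih =>
      intro f hf
      rw [Finset.sum_cons, Finset.prod_cons]
      rcases s.eq_empty_or_nonempty with rfl | hne
      · simp
      · have h1 : ∑ p ∈ s, f p ≤ ∏ p ∈ s, f p := ih f fun p hp => hf p (Finset.mem_cons_of_mem hp)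
        have h2' : 2 ≤ ∏ p ∈ s, f p := by
          obtain ⟨b, hb⟩ := hne
          calc 2 ≤ f b := hf b (Finset.mem_cons_of_mem hb)
          _ ≤ ∏ p ∈ s, f p := Finset.single_le_prod' (fun i hi => Nat.one_le_of_lt (hf i (Finset.mem_cons_of_mem hi))) hb
        have hfa := hf a (Finset.mem_cons_self a s)
        calc f a + ∑ p ∈ s, f p ≤ f a + ∏ p ∈ s, f p := by omega
        _ ≤ f a * ∏ p ∈ s, f p := by nlinarith
  calc ell M ≤ ∏ p ∈ M.primeFactors, p ^ M.factorization p := key _ _ h2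
  _ = M := Nat.factorization_prod_pow_eq_self (Nat.one_le_iff_ne_zero.mp hM)

lemma log_prime_pos {p : ℕ} (hp : p.Prime) : 0 < Real.log p :=
  Real.log_pos (by exact_mod_cast hp.one_lt)

lemma ell_prime {p : ℕ} (hp : p.Prime) : ell p = p := by
  have := ell_prime_pow hp (le_refl 1); simpa using this

lemma ellCost_one {p : ℕ} (hp : p.Prime) : ellCost p 1 = p / Real.log p := by
  simp [ellCost, ell_one, ell_prime hp]

lemma ellCost_mul_log {p k : ℕ} (hp : p.Prime) :
    ellCost p k * Real.log p = (ell (p ^ k) : ℝ) - (ell (p ^ (k - 1)) : ℝ) := by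
  rw [ellCost, div_mul_cancel₀ _ (log_prime_pos hp).ne']

lemma ell_pow_sub_le {p k : ℕ} (hp : p.Prime) (hk : 1 ≤ k) :
    ell (p ^ (k-1)) + p ^ (k-1) ≤ ell (p ^ k) := by
  rcases Nat.eq_or_lt_of_le hk with h | h
  · rw [← h]; simp [ell_one, ell_pow_zero, ell_prime hp]; exact hp.pos
  · rw [ell_prime_pow hp hk, ell_prime_pow hp (by omega : 1 ≤ k - 1)]
    have : p ^ (k-1) * 2 ≤ p ^ (k-1) * p := Nat.mul_le_mul_left _ hp.two_le
    have hpk : p ^ (k-1) * p = p ^ k := by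
      rw [← pow_succ]; congr 1; omega
    omega

lemma ellCost_mono {p : ℕ} (hp : p.Prime) {j k : ℕ} (hj : 1 ≤ j) (hjk : j ≤ k) :
    ellCost p j ≤ ellCost p k := by
  induction k with
  | zero => omega
  | succ n ih =>
    rcases Nat.eq_or_lt_of_le hjk with h | h
    · rw [h]
    · have hjn : j ≤ n := by omega
      have hn1 : 1 ≤ n := le_trans hj hjn
      refine (ih hjn).trans ?_
      rw [ellCost, ellCost, div_le_div_iff_of_pos_right (log_prime_pos hp)]
      simp only [Nat.add_sub_cancel]
      have hv1 : ell (p ^ n) = p ^ n := ell_prime_pow hp hn1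
      have hv2 : ell (p ^ (n+1)) = p ^ (n+1) := ell_prime_pow hp (by omega)
      have hv3 : ell (p ^ (n-1)) ≤ p ^ (n-1) := by
        rcases Nat.eq_or_lt_of_le hn1 with h1 | h1
        · rw [← h1]; simp [ell_one, ell_pow_zero]
        · rw [ell_prime_pow hp (by omega : 1 ≤ n - 1)]
      have h2 : p ^ n * 2 ≤ p ^ n * p := Nat.mul_le_mul_left _ hp.two_le
      have hpk : p ^ n * p = p ^ (n+1) := by rw [← pow_succ]
      have hz : (ell (p ^ n) : ℤ) - ell (p ^ (n-1)) ≤ (ell (p ^ (n+1)) : ℤ) - ell (p ^ n) := by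
        have hpow : (0:ℤ) ≤ p ^ (n-1) := by positivity
        push_cast; omega
      exact_mod_cast hz

lemma ellCost_lb {p k : ℕ} (hp : p.Prime) (hk : 1 ≤ k) :
    (k : ℝ) ≤ ellCost p k * Real.log p := by
  rw [ellCost_mul_log hp]
  have e1 := ell_pow_sub_le hp hk
  have h2 : k ≤ p ^ (k - 1) := by
    calc k ≤ 2 ^ (k-1) := by
          have := Nat.lt_two_pow_self (n := k-1)
          omega
    _ ≤ p ^ (k-1) := Nat.pow_le_pow_left hp.two_le _
  have : (k : ℤ) ≤ (ell (p ^ k) : ℤ) - ell (p ^ (k-1)) := by push_cast; omega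
  exact_mod_cast this

lemma logx_pos {x : ℝ} (hx : 4 < x) : 0 < Real.log x := Real.log_pos (by linarith)

/-- For a prime `p ≤ x`, the starting cost `p / log p` is at most `ρ = x / log x`. -/
lemma start_cost_le {x : ℝ} (hx : 4 < x) (hρ2 : 2 / Real.log 2 < x / Real.log x)
    {p : ℕ} (hp : p.Prime) (hpx : (p : ℝ) ≤ x) :
    (p : ℝ) / Real.log p ≤ x / Real.log x := by
  rcases eq_or_lt_of_le hp.two_le with h2 | h3
  · rw [← h2]; push_cast; linarith
  · have hp3 : (3 : ℝ) ≤ p := by exact_mod_cast h3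
    have he : Real.exp 1 ≤ 3 := by
      have := Real.exp_one_lt_d9; linarith
    have hmem1 : (p : ℝ) ∈ {t : ℝ | Real.exp 1 ≤ t} := le_trans he hp3
    have hmem2 : x ∈ {t : ℝ | Real.exp 1 ≤ t} := le_trans he (by linarith)
    have hanti := Real.log_div_self_antitoneOn hmem1 hmem2 hpx
    -- hanti : log x / x ≤ log p / p
    have hpp : (0 : ℝ) < p := by positivity
    have hlp : 0 < Real.log p := log_prime_pos hp
    have hlx := logx_pos hx
    have hxpos : (0:ℝ) < x := by linarith
    simp only at hanti
    rw [div_le_div_iff₀ hxpos hpp] at hanti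
    rw [div_le_div_iff₀ hlp hlx]
    nlinarith

lemma alpha_spec_le {x : ℝ} (hx : 4 < x) (hρ2 : 2 / Real.log 2 < x / Real.log x)
    {p : ℕ} (hp : p.Prime) (hpx : (p : ℝ) ≤ x) :
    1 ≤ alphaExp x p ∧ ellCost p (alphaExp x p) ≤ x / Real.log x ∧
      ∀ k, 1 ≤ k → ellCost p k ≤ x / Real.log x → k ≤ alphaExp x p := by
  set S : Set ℕ := {k : ℕ | 1 ≤ k ∧ ellCost p k ≤ x / Real.log x} with hS
  have hne : S.Nonempty := ⟨1, le_rfl, by rw [ellCost_one hp]; exact start_cost_le hx hρ2 hp hpx⟩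
  have hbdd : BddAbove S := by
    refine ⟨⌈x / Real.log x * Real.log p⌉₊, fun k hk => ?_⟩
    have h1 := ellCost_lb hp hk.1
    have h2 : ellCost p k * Real.log p ≤ x / Real.log x * Real.log p :=
      mul_le_mul_of_nonneg_right hk.2 (log_prime_pos hp).le
    have h3 : (k : ℝ) ≤ (⌈x / Real.log x * Real.log p⌉₊ : ℝ) :=
      (h1.trans h2).trans (Nat.le_ceil _)
    exact_mod_cast h3
  have hmem : sSup S ∈ S := Nat.sSup_mem hne hbdd
  have halpha : alphaExp x p = sSup S := if_pos hpx
  refine ⟨halpha ▸ hmem.1, halpha ▸ hmem.2, fun k hk1 hk2 => halpha ▸ le_csSup hbdd ⟨hk1, hk2⟩⟩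

/-- The per-prime objective `ℓ(p^k) - ρ k log p`. -/
noncomputable def Fobj (ρ : ℝ) (p k : ℕ) : ℝ := (ell (p ^ k) : ℝ) - ρ * (k * Real.log p)

lemma Fobj_succ (ρ : ℝ) {p : ℕ} (hp : p.Prime) (k : ℕ) :
    Fobj ρ p (k + 1) = Fobj ρ p k + (ellCost p (k + 1) - ρ) * Real.log p := by
  have h := ellCost_mul_log (p := p) (k := k + 1) hp
  simp only [Nat.add_sub_cancel] at h
  simp only [Fobj, sub_mul]
  push_cast
  rw [h]
  ring

/-- For `p > x` (so `alphaExp = 0`) or per the sSup-spec, costs above alpha exceed ρ. -/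
lemma alpha_cost_above {x : ℝ} (hx : 4 < x) (hρ2 : 2 / Real.log 2 < x / Real.log x)
    {p : ℕ} (hp : p.Prime) {j : ℕ} (hj : alphaExp x p < j) :
    x / Real.log x ≤ ellCost p j := by
  by_cases hpx : (p : ℝ) ≤ x
  · obtain ⟨h1, _h2, h3⟩ := alpha_spec_le hx hρ2 hp hpx
    by_contra hlt
    push_neg at hlt
    exact absurd (h3 j (by omega) hlt.le) (by omega)
  · push_neg at hpx
    have ha : alphaExp x p = 0 := if_neg (not_le.mpr hpx)
    have hj1 : 1 ≤ j := by omega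
    have : (x : ℝ) / Real.log x ≤ (p : ℝ) / Real.log p := by
      have he : Real.exp 1 ≤ 3 := by have := Real.exp_one_lt_d9; linarith
      have hmem2 : (p:ℝ) ∈ {t : ℝ | Real.exp 1 ≤ t} := le_trans (le_trans he (by linarith)) hpx.le
      have hmem1 : x ∈ {t : ℝ | Real.exp 1 ≤ t} := le_trans he (by linarith)
      have hanti := Real.log_div_self_antitoneOn hmem1 hmem2 hpx.le
      simp only at hanti
      have hpp : (0 : ℝ) < p := by linarith
      have hlp : 0 < Real.log p := log_prime_pos hp
      have hlx := logx_pos hx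
      have hxpos : (0:ℝ) < x := by linarith
      rw [div_le_div_iff₀ hpp hxpos] at hanti
      rw [div_le_div_iff₀ hlx hlp]
      nlinarith
    calc x / Real.log x ≤ (p : ℝ) / Real.log p := this
    _ = ellCost p 1 := (ellCost_one hp).symm
    _ ≤ ellCost p j := ellCost_mono hp le_rfl hj1

lemma alpha_cost_below {x : ℝ} (hx : 4 < x) (hρ2 : 2 / Real.log 2 < x / Real.log x)
    {p : ℕ} (hp : p.Prime) {j : ℕ} (hj1 : 1 ≤ j) (hj : j ≤ alphaExp x p) :
    ellCost p j ≤ x / Real.log x := by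
  by_cases hpx : (p : ℝ) ≤ x
  · obtain ⟨h1, h2, _⟩ := alpha_spec_le hx hρ2 hp hpx
    exact (ellCost_mono hp hj1 hj).trans h2
  · have : alphaExp x p = 0 := if_neg hpx
    omega

/-- `Fobj` is minimized at `alphaExp x p`. -/
lemma Fobj_min {x : ℝ} (hx : 4 < x) (hρ2 : 2 / Real.log 2 < x / Real.log x)
    {p : ℕ} (hp : p.Prime) (k : ℕ) :
    Fobj (x / Real.log x) p (alphaExp x p) ≤ Fobj (x / Real.log x) p k := by
  set ρ := x / Real.log x
  set α := alphaExp x p with hα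
  rcases le_or_gt α k with h | h
  · -- increasing above α
    induction k, h using Nat.le_induction with
    | base => exact le_rfl
    | succ n hn ih =>
      have step : Fobj ρ p n ≤ Fobj ρ p (n+1) := by
        rw [Fobj_succ ρ hp n]
        have hc := alpha_cost_above hx hρ2 hp (by omega : α < n + 1)
        nlinarith [log_prime_pos hp]
      exact le_trans ih step
  · -- decreasing below α : show for all j ≤ α, Fobj α ≤ Fobj j by downward induction
    have key : ∀ d, ∀ j, j + d = α → Fobj ρ p α ≤ Fobj ρ p j := by
      intro d
      induction d with
      | zero => intro j hj; rw [← hj]; simp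
      | succ m ih =>
        intro j hj
        have step : Fobj ρ p (j+1) ≤ Fobj ρ p j := by
          rw [Fobj_succ ρ hp j]
          have hc := alpha_cost_below hx hρ2 hp (by omega : 1 ≤ j + 1) (by omega : j + 1 ≤ α)
          nlinarith [log_prime_pos hp]
        exact le_trans (ih (j+1) (by omega)) step
    exact key (α - k) k (by omega)

lemma Nrho_pos (x : ℝ) : 0 < Nrho x := by
  apply Finset.prod_pos
  intro p hp
  exact pow_pos (Nat.Prime.pos (Finset.mem_filter.mp hp).2) _

lemma mem_Pfin {x : ℝ} (hx : 4 < x) {q : ℕ} (hq : q.Prime) :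
    q ∈ (Finset.range (⌊x⌋₊ + 1)).filter Nat.Prime ↔ (q : ℝ) ≤ x := by
  rw [Finset.mem_filter, Finset.mem_range]
  constructor
  · rintro ⟨h, -⟩
    have : q ≤ ⌊x⌋₊ := by omega
    calc (q : ℝ) ≤ (⌊x⌋₊ : ℝ) := by exact_mod_cast this
    _ ≤ x := Nat.floor_le (by linarith)
  · intro h
    exact ⟨by have := Nat.le_floor h; omega, hq⟩

lemma Nrho_factorization {x : ℝ} (hx : 4 < x) {q : ℕ} (hq : q.Prime) :
    (Nrho x).factorization q = alphaExp x q := by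
  rw [Nrho, Nat.factorization_prod (fun p hp =>
    pow_ne_zero _ (Nat.Prime.pos (Finset.mem_filter.mp hp).2).ne')]
  rw [Finsupp.finset_sum_apply]
  by_cases hmem : q ∈ (Finset.range (⌊x⌋₊ + 1)).filter Nat.Prime
  · rw [Finset.sum_eq_single q]
    · rw [(Finset.mem_filter.mp hmem).2.factorization_pow, Finsupp.single_eq_same]
    · intro p hp hpq
      rw [(Finset.mem_filter.mp hp).2.factorization_pow, Finsupp.single_eq_of_ne' hpq]
    · intro h; exact absurd hmem h
  · have hqx : ¬ (q : ℝ) ≤ x := fun h => hmem ((mem_Pfin hx hq).mpr h)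
    rw [alphaExp, if_neg hqx]
    apply Finset.sum_eq_zero
    intro p hp
    have hpq : p ≠ q := fun h => hmem (h ▸ hp)
    rw [(Finset.mem_filter.mp hp).2.factorization_pow, Finsupp.single_eq_of_ne' hpq]

/-- `ℓ(M) - ρ log M` as a sum of `Fobj` over any finset of primes containing `M.primeFactors`. -/
lemma ell_sub_log_eq {M : ℕ} (hM : M ≠ 0) (ρ : ℝ) {S : Finset ℕ}
    (hMS : M.primeFactors ⊆ S) :
    (ell M : ℝ) - ρ * Real.log M = ∑ p ∈ S, Fobj ρ p (M.factorization p) := by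
  have hlog : Real.log M = ∑ p ∈ M.primeFactors, (M.factorization p : ℝ) * Real.log p := by
    conv_lhs => rw [← Nat.factorization_prod_pow_eq_self hM]
    rw [Nat.prod_factorization_eq_prod_primeFactors]
    push_cast
    rw [Real.log_prod (fun p hp => by
      have h1 := Nat.prime_of_mem_primeFactors hp
      have h2 : (0:ℝ) < p := by exact_mod_cast h1.pos
      positivity)]
    exact Finset.sum_congr rfl fun p _ => by rw [Real.log_pow]
  have hellN : ell M = ∑ p ∈ M.primeFactors, ell (p ^ M.factorization p) :=
    Finset.sum_congr rfl fun p hp => (ell_prime_pow (Nat.prime_of_mem_primeFactors hp)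
      (Nat.Prime.factorization_pos_of_dvd (Nat.prime_of_mem_primeFactors hp) hM
        (Nat.dvd_of_mem_primeFactors hp))).symm
  have hell : (ell M : ℝ) = ∑ p ∈ M.primeFactors, (ell (p ^ M.factorization p) : ℝ) := by
    rw [hellN]; push_cast; rfl
  rw [hell, hlog, Finset.mul_sum, ← Finset.sum_sub_distrib]
  rw [Finset.sum_subset hMS]
  · exact Finset.sum_congr rfl fun p _ => by rw [Fobj]
  · intro p _ hp
    have h0 : M.factorization p = 0 := by
      by_contra h0
      exact hp (by rw [← Nat.support_factorization]; exact Finsupp.mem_support_iff.mpr h0)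
    simp [Fobj, h0, ell_one]

/-- Part A: superiority of `Nrho`. -/
lemma Nrho_superior {x : ℝ} (hx : 4 < x) (hρ2 : 2 / Real.log 2 < x / Real.log x)
    {M : ℕ} (hM : 1 ≤ M) :
    (ell (Nrho x) : ℝ) - (x / Real.log x) * Real.log (Nrho x) ≤
      (ell M : ℝ) - (x / Real.log x) * Real.log M := by
  set ρ := x / Real.log x
  set N := Nrho x with hN
  have hN0 : N ≠ 0 := (Nrho_pos x).ne'
  have hM0 : M ≠ 0 := by omega
  set S := M.primeFactors ∪ N.primeFactors with hS
  have hSp : ∀ p ∈ S, p.Prime := fun p hp => by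
    rcases Finset.mem_union.mp hp with h | h <;> exact Nat.prime_of_mem_primeFactors h
  rw [ell_sub_log_eq hM0 ρ Finset.subset_union_left,
    ell_sub_log_eq hN0 ρ Finset.subset_union_right]
  apply Finset.sum_le_sum
  intro p hp
  have hpp := hSp p hp
  rw [Nrho_factorization hx hpp]
  exact Fobj_min hx hρ2 hpp _

lemma ell_lcm_le {a b : ℕ} (ha : a ≠ 0) (hb : b ≠ 0) :
    ell (Nat.lcm a b) ≤ ell a + ell b := by
  set L := Nat.lcm a b with hL
  have hL0 : L ≠ 0 := Nat.lcm_ne_zero ha hb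
  have hfac : L.factorization = a.factorization ⊔ b.factorization :=
    Nat.factorization_lcm ha hb
  have hsub : L.primeFactors ⊆ a.primeFactors ∪ b.primeFactors := by
    intro p hp
    have hpp := Nat.prime_of_mem_primeFactors hp
    have hdvd : p ∣ L := Nat.dvd_of_mem_primeFactors hp
    have : p ∣ a * b := hdvd.trans (Nat.lcm_dvd_mul a b)
    rcases (Nat.Prime.dvd_mul hpp).mp this with h | h
    · exact Finset.mem_union_left _ (Nat.mem_primeFactors.mpr ⟨hpp, h, ha⟩)
    · exact Finset.mem_union_right _ (Nat.mem_primeFactors.mpr ⟨hpp, h, hb⟩)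
  set g : ℕ → ℕ := fun p => (if p ∈ a.primeFactors then p ^ a.factorization p else 0) +
    (if p ∈ b.primeFactors then p ^ b.factorization p else 0) with hg
  have hterm : ∀ p ∈ L.primeFactors, p ^ L.factorization p ≤ g p := by
    intro p hp
    have hLv : L.factorization p = max (a.factorization p) (b.factorization p) := by
      rw [hfac]; rfl
    have hv1 : 1 ≤ L.factorization p := by
      rw [← Nat.support_factorization] at hp
      have := Finsupp.mem_support_iff.mp hp
      omega
    rcases le_total (b.factorization p) (a.factorization p) with h | h
    · have hmax : L.factorization p = a.factorization p := by rw [hLv]; omega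
      have hmem : p ∈ a.primeFactors := by
        rw [← Nat.support_factorization]
        exact Finsupp.mem_support_iff.mpr (by omega)
      simp only [hg, hmax, if_pos hmem]
      omega
    · have hmax : L.factorization p = b.factorization p := by rw [hLv]; omega
      have hmem : p ∈ b.primeFactors := by
        rw [← Nat.support_factorization]
        exact Finsupp.mem_support_iff.mpr (by omega)
      simp only [hg, hmax, if_pos hmem]
      omega
  calc ell L ≤ ∑ p ∈ L.primeFactors, g p := Finset.sum_le_sum hterm
  _ ≤ ∑ p ∈ a.primeFactors ∪ b.primeFactors, g p :=
      Finset.sum_le_sum_of_subset hsub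
  _ = ell a + ell b := by
      rw [hg, Finset.sum_add_distrib]
      congr 1
      · rw [Finset.sum_ite_mem, Finset.union_inter_cancel_left, ell]
      · rw [Finset.sum_ite_mem, Finset.union_inter_cancel_right, ell]

lemma ell_multiset_lcm_le (m : Multiset ℕ) (hm : ∀ a ∈ m, a ≠ 0) :
    ell m.lcm ≤ m.sum := by
  induction m using Multiset.induction with
  | empty => simp [Multiset.lcm_zero, ell_one]
  | cons a s ih =>
    have ha : a ≠ 0 := hm a (Multiset.mem_cons_self a s)
    have hs : ∀ b ∈ s, b ≠ 0 := fun b hb => hm b (Multiset.mem_cons_of_mem hb)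
    have hslcm : s.lcm ≠ 0 := fun h => hs 0 ((Multiset.lcm_eq_zero_iff s).mp h) rfl
    rw [Multiset.lcm_cons]
    calc ell (lcm a s.lcm) = ell (Nat.lcm a s.lcm) := by rw [lcm_eq_nat_lcm]
    _ ≤ ell a + ell s.lcm := ell_lcm_le ha hslcm
    _ ≤ a + s.sum := by
        have h1 := ell_le_self (Nat.one_le_iff_ne_zero.mpr ha)
        have h2 := ih hs
        omega
    _ = (a ::ₘ s).sum := by rw [Multiset.sum_cons]

/-- The multiset of prime-power components of `N`. -/
def pcomp (N : ℕ) : Multiset ℕ := N.primeFactors.val.map (fun p => p ^ N.factorization p)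

lemma pcomp_sum (N : ℕ) : (pcomp N).sum = ell N := rfl

lemma pcomp_two_le {N : ℕ} (hN : N ≠ 0) : ∀ a ∈ pcomp N, 2 ≤ a := by
  intro a ha
  obtain ⟨p, hp, rfl⟩ := Multiset.mem_map.mp ha
  have hp' : p ∈ N.primeFactors := hp
  have hpp := Nat.prime_of_mem_primeFactors hp'
  have h1 : 1 ≤ N.factorization p :=
    Nat.Prime.factorization_pos_of_dvd hpp hN (Nat.dvd_of_mem_primeFactors hp')
  calc 2 = 2 ^ 1 := rfl
  _ ≤ p ^ N.factorization p :=
    le_trans (Nat.pow_le_pow_left hpp.two_le 1) (Nat.pow_le_pow_right hpp.pos h1)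

lemma pcomp_lcm {N : ℕ} (hN : N ≠ 0) : (pcomp N).lcm = N := by
  have h0 : ∀ a ∈ pcomp N, a ≠ 0 := fun a ha => by have := pcomp_two_le hN a ha; omega
  have hlcm0 : (pcomp N).lcm ≠ 0 := fun h => h0 0 ((Multiset.lcm_eq_zero_iff _).mp h) rfl
  apply Nat.dvd_antisymm
  · rw [Multiset.lcm_dvd]
    intro b hb
    obtain ⟨p, hp, rfl⟩ := Multiset.mem_map.mp hb
    exact Nat.ordProj_dvd N p
  · rw [← Nat.factorization_le_iff_dvd hN hlcm0]
    intro q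
    by_cases hq : N.factorization q = 0
    · simp [hq]
    · have hqmem : q ∈ N.primeFactors := by
        rw [← Nat.support_factorization]; exact Finsupp.mem_support_iff.mpr hq
      have hqp := Nat.prime_of_mem_primeFactors hqmem
      have hmem : q ^ N.factorization q ∈ pcomp N :=
        Multiset.mem_map.mpr ⟨q, hqmem, rfl⟩
      have hdvd : q ^ N.factorization q ∣ (pcomp N).lcm := Multiset.dvd_lcm hmem
      exact (Nat.Prime.pow_dvd_iff_le_factorization hqp hlcm0).mp hdvd

theorem Nrho_aux (ρ x : ℝ)
    (hρ : 2 / Real.log 2 < ρ) (hx : 4 < x) (hρx : ρ = x / Real.log x) :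
    (∀ M : ℕ, 1 ≤ M →
      (ell (Nrho x) : ℝ) - ρ * Real.log (Nrho x) ≤ (ell M : ℝ) - ρ * Real.log M) ∧
    ∃ n : ℕ, Nrho x = landau n := by
  subst hρx
  have hA : ∀ M : ℕ, 1 ≤ M →
      (ell (Nrho x) : ℝ) - (x / Real.log x) * Real.log (Nrho x) ≤
        (ell M : ℝ) - (x / Real.log x) * Real.log M :=
    fun M hM => Nrho_superior hx hρ hM
  refine ⟨hA, ell (Nrho x), ?_⟩
  set N := Nrho x with hNdef
  have hN0 : N ≠ 0 := (Nrho_pos x).ne'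
  set n := ell N with hn
  have hcard : Fintype.card (Fin n) = n := Fintype.card_fin n
  -- N is attained as an order
  obtain ⟨σ₀, hσ₀⟩ : ∃ σ : Equiv.Perm (Fin n), σ.cycleType = pcomp N := by
    rw [Equiv.Perm.exists_with_cycleType_iff]
    exact ⟨by rw [pcomp_sum, hcard], pcomp_two_le hN0⟩
  have horder : orderOf σ₀ = N := by
    rw [← Equiv.Perm.lcm_cycleType, hσ₀, pcomp_lcm hN0]
  apply le_antisymm
  · rw [← horder]
    exact Finset.le_sup (Finset.mem_univ σ₀)
  · apply Finset.sup_le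
    intro σ _
    set M := orderOf σ with hM
    have hM1 : 1 ≤ M := orderOf_pos σ
    have hMell : ell M ≤ n := by
      rw [hM, ← Equiv.Perm.lcm_cycleType]
      calc ell σ.cycleType.lcm ≤ σ.cycleType.sum :=
            ell_multiset_lcm_le _ (fun a ha => by
              have := Equiv.Perm.two_le_of_mem_cycleType ha; omega)
      _ = σ.support.card := Equiv.Perm.sum_cycleType σ
      _ ≤ Fintype.card (Fin n) := σ.support.card_le_univ
      _ = n := hcard
    -- conclude M ≤ N from part A
    have hineq := hA M hM1
    have hρpos : 0 < x / Real.log x := div_pos (by linarith) (logx_pos hx)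
    have hlog : Real.log M ≤ Real.log N := by
      by_contra hcon
      push_neg at hcon
      have h1 : (ell M : ℝ) ≤ (ell N : ℝ) := by exact_mod_cast hMell
      nlinarith
    have hMN : (M : ℝ) ≤ N := by
      rwa [Real.log_le_log_iff (by exact_mod_cast hM1 : (0:ℝ) < M)
        (by exact_mod_cast Nrho_pos x)] at hlog
    exact_mod_cast hMN

/-- For `ρ > 2/log 2` and `x > 4` with `ρ = x/log x`, the integer `N_ρ`
satisfies `ℓ(M) - ρ log M ≥ ℓ(N_ρ) - ρ log N_ρ` for all `M ≥ 1`; in particular `N_ρ` is a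
value of Landau's function. -/
theorem Nrho_superior_and_mem_range_landau (ρ x : ℝ)
    (hρ : 2 / Real.log 2 < ρ) (hx : 4 < x) (hρx : ρ = x / Real.log x) :
    (∀ M : ℕ, 1 ≤ M →
      (ell (Nrho x) : ℝ) - ρ * Real.log (Nrho x) ≤ (ell M : ℝ) - ρ * Real.log M) ∧
    ∃ n : ℕ, Nrho x = landau n :=
  Nrho_aux ρ x hρ hx hρx
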